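/- Let a ≤ b and c be positive integers with a, b both odd, and set T(q) = [a]_q · [b]_q · [c]_{q^2}. Then for every integer k ≥ 0, the difference of consecutive coefficients satisfies [q^{k+1}]T(q) − [q^k]T(q) = A(k) − B(k), where A(k) := #{ℓ ∈ ℤ : 0 ≤ ℓ ≤ c − 1 and (k − a + 2)/2 ≤ ℓ ≤ (k + 1)/2} and B(k) := #{ℓ ∈ ℤ : 0 ≤ ℓ ≤ c − 1 and (k − a − b + 2)/2 ≤ ℓ ≤ (k − b + 1)/2}. -/

import Mathlib

open Polynomial

/-- The q-analog `[n]_q = 1 + q + ⋯ + q^(n-1)` as a polynomial in `ℤ[q]`. -/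
noncomputable def qAnalog (n : ℕ) : Polynomial ℤ :=
  ∑ i ∈ Finset.range n, X ^ i

/-- The q-analog `[n]_{q^r} = 1 + q^r + ⋯ + q^(r(n-1))` as a polynomial in `ℤ[q]`. -/
noncomputable def qAnalogPow (n r : ℕ) : Polynomial ℤ :=
  ∑ i ∈ Finset.range n, X ^ (r * i)

/-- A polynomial of degree `d` is symmetric if `c_k = c_{d-k}` for all `0 ≤ k ≤ d`. -/
def IsSymmPoly (P : Polynomial ℤ) : Prop :=
  ∀ k ≤ P.natDegree, P.coeff k = P.coeff (P.natDegree - k)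

/-- A polynomial is unimodal if its coefficient sequence increases up to some
index `M` and decreases afterwards. -/
def IsUnimodalPoly (P : Polynomial ℤ) : Prop :=
  ∃ M : ℕ, (∀ k, k < M → P.coeff k ≤ P.coeff (k + 1)) ∧
    (∀ k, M ≤ k → P.coeff (k + 1) ≤ P.coeff k)

lemma qAnalog_coeff (n s : ℕ) : (qAnalog n).coeff s = if s < n then 1 else 0 := by
  simp [qAnalog, coeff_X_pow, Finset.sum_ite_eq, Finset.mem_range]

lemma R_coeff (a c m : ℕ) : (qAnalog a * qAnalogPow c 2).coeff m
    = ((Finset.range c).filter (fun ℓ => 2*ℓ ≤ m ∧ m - 2*ℓ < a)).card := by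
  rw [qAnalogPow, Finset.mul_sum, finset_sum_coeff, Finset.card_filter]
  push_cast
  refine Finset.sum_congr rfl fun ℓ _ => ?_
  rw [coeff_mul_X_pow', qAnalog_coeff]
  split_ifs <;> simp_all <;> omega

lemma one_sub_X_mul (n : ℕ) : (1 - X : Polynomial ℤ) * qAnalog n = 1 - X ^ n := by
  have h := geom_sum_mul (X : Polynomial ℤ) n
  rw [qAnalog]
  linear_combination -h

lemma cast_Icc (c : ℕ) : Finset.Icc (0:ℤ) ((c:ℤ)-1)
    = (Finset.range c).map ⟨fun n : ℕ => (n : ℤ), Nat.cast_injective⟩ := by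
  ext ℓ
  simp only [Finset.mem_Icc, Finset.mem_map, Finset.mem_range, Function.Embedding.coeFn_mk]
  constructor
  · rintro ⟨h0, h1⟩; exact ⟨ℓ.toNat, by omega, by omega⟩
  · rintro ⟨n, hn, rfl⟩; constructor <;> omega

theorem coeff_diff_eq_A_sub_B (a b c : ℕ)
    (ha : 1 ≤ a) (hb : 1 ≤ b) (hc : 1 ≤ c) (hab : a ≤ b)
    (haodd : Odd a) (hbodd : Odd b) :
    ∀ k : ℕ,
      (qAnalog a * qAnalog b * qAnalogPow c 2).coeff (k + 1) -
        (qAnalog a * qAnalog b * qAnalogPow c 2).coeff k =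
      (((Finset.Icc (0 : ℤ) ((c : ℤ) - 1)).filter (fun ℓ : ℤ =>
          ((k : ℚ) - a + 2) / 2 ≤ (ℓ : ℚ) ∧ (ℓ : ℚ) ≤ ((k : ℚ) + 1) / 2)).card : ℤ) -
      (((Finset.Icc (0 : ℤ) ((c : ℤ) - 1)).filter (fun ℓ : ℤ =>
          ((k : ℚ) - a - b + 2) / 2 ≤ (ℓ : ℚ) ∧
          (ℓ : ℚ) ≤ ((k : ℚ) - b + 1) / 2)).card : ℤ) := by
  intro k
  set T := qAnalog a * qAnalog b * qAnalogPow c 2 with hT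
  set R := qAnalog a * qAnalogPow c 2 with hR
  have h1 : (1 - X : Polynomial ℤ) * T = R - X ^ b * R := by
    rw [hT, hR]
    linear_combination (qAnalog a * qAnalogPow c 2) * one_sub_X_mul b
  have hd : T.coeff (k+1) - T.coeff k = R.coeff (k+1) - (X ^ b * R).coeff (k+1) := by
    have h2 := congrArg (fun p : Polynomial ℤ => p.coeff (k+1)) h1
    simpa only [sub_mul, one_mul, coeff_sub, coeff_X_mul] using h2
  have hXb : (X ^ b * R).coeff (k+1)
      = if b ≤ k+1 then R.coeff (k+1-b) else 0 := by
    rw [mul_comm, coeff_mul_X_pow']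
  -- A part
  have hAcard : (((Finset.Icc (0 : ℤ) ((c : ℤ) - 1)).filter (fun ℓ : ℤ =>
        ((k : ℚ) - a + 2) / 2 ≤ (ℓ : ℚ) ∧ (ℓ : ℚ) ≤ ((k : ℚ) + 1) / 2)).card : ℤ)
      = R.coeff (k+1) := by
    rw [hR, R_coeff, cast_Icc, Finset.filter_map, Finset.card_map]
    refine congrArg (fun s => ((Finset.card s : ℕ) : ℤ)) (Finset.filter_congr fun n _ => ?_)
    simp only [Function.Embedding.coeFn_mk, Function.comp_apply]
    rw [div_le_iff₀ (by norm_num : (0:ℚ) < 2), le_div_iff₀ (by norm_num : (0:ℚ) < 2)]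
    push_cast
    constructor
    · rintro ⟨h1, h2⟩
      have e1 : (2*n:ℚ) ≤ (k:ℚ)+1 := by linarith
      have e2 : (k:ℚ)+2 ≤ (a:ℚ) + 2*n := by linarith
      have e1' : 2*n ≤ k+1 := by exact_mod_cast e1
      have e2' : k+2 ≤ a+2*n := by exact_mod_cast e2
      omega
    · rintro ⟨h1, h2⟩
      have e1 : (2:ℚ)*(n:ℚ) ≤ (k:ℚ)+1 := by exact_mod_cast h1
      have e2 : (k:ℚ)+2 ≤ (a:ℚ)+2*(n:ℚ) := by exact_mod_cast (show k+2 ≤ a+2*n by omega)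
      constructor <;> linarith
  -- B part
  have hBcard : (((Finset.Icc (0 : ℤ) ((c : ℤ) - 1)).filter (fun ℓ : ℤ =>
        ((k : ℚ) - a - b + 2) / 2 ≤ (ℓ : ℚ) ∧ (ℓ : ℚ) ≤ ((k : ℚ) - b + 1) / 2)).card : ℤ)
      = if b ≤ k+1 then R.coeff (k+1-b) else 0 := by
    by_cases hbk : b ≤ k+1
    · rw [if_pos hbk, hR, R_coeff, cast_Icc, Finset.filter_map, Finset.card_map]
      refine congrArg (fun s => ((Finset.card s : ℕ) : ℤ)) (Finset.filter_congr fun n _ => ?_)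
      simp only [Function.Embedding.coeFn_mk, Function.comp_apply]
      rw [div_le_iff₀ (by norm_num : (0:ℚ) < 2), le_div_iff₀ (by norm_num : (0:ℚ) < 2)]
      push_cast
      constructor
      · rintro ⟨h1, h2⟩
        have e1 : (2*n:ℚ) + b ≤ (k:ℚ)+1 := by linarith
        have e2 : (k:ℚ)+2 ≤ (a:ℚ) + b + 2*n := by linarith
        have e1' : 2*n + b ≤ k+1 := by exact_mod_cast e1
        have e2' : k+2 ≤ a+b+2*n := by exact_mod_cast e2
        omega
      · rintro ⟨h1, h2⟩
        have e1 : (2:ℚ)*(n:ℚ) + b ≤ (k:ℚ)+1 := by exact_mod_cast (show 2*n+b ≤ k+1 by omega)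
        have e2 : (k:ℚ)+2 ≤ (a:ℚ)+(b:ℚ)+2*(n:ℚ) := by
          exact_mod_cast (show k+2 ≤ a+b+2*n by omega)
        constructor <;> linarith
    · rw [if_neg hbk]
      have hem : ((Finset.Icc (0 : ℤ) ((c : ℤ) - 1)).filter (fun ℓ : ℤ =>
          ((k : ℚ) - a - b + 2) / 2 ≤ (ℓ : ℚ) ∧ (ℓ : ℚ) ≤ ((k : ℚ) - b + 1) / 2)).card = 0 := by
        rw [Finset.card_eq_zero, Finset.filter_eq_empty_iff]
        rintro ℓ hℓ ⟨h1, h2⟩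
        rw [Finset.mem_Icc] at hℓ
        rw [le_div_iff₀ (by norm_num : (0:ℚ) < 2)] at h2
        have hl0 : (0:ℚ) ≤ (ℓ:ℚ) := by exact_mod_cast hℓ.1
        have hkb : (k:ℚ)+1 < (b:ℚ) := by exact_mod_cast Nat.lt_of_not_le hbk
        linarith
      rw [hem, Nat.cast_zero]
  rw [hd, hXb, hAcard, hBcard]
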